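/- If the distortion function D is convex, then 𝓛_Q ⊆ {X | E[X^+] < ∞}, and E[X] ≤ ϱ_Q[X] holds for every X ∈ 𝓛_Q (where E[X] := E[X^+] − E[X^−] ∈ [−∞,∞)). -/

import Mathlib

set_option linter.unusedSectionVars false
set_option linter.unusedVariables false
set_option linter.unusedTactic false
set_option maxHeartbeats 1000000

open MeasureTheory Set

/-- The distribution function `F_X(x) = P[X ≤ x]` of a random variable `X`. -/
noncomputable def distFun {Ω : Type*} [MeasurableSpace Ω] (P : Measure Ω) (X : Ω → ℝ) (x : ℝ) : ℝ :=
  (P {ω | X ω ≤ x}).toReal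

/-- The (lower) quantile function `F^←_X(u) = inf {x | F_X(x) ≥ u}`. -/
noncomputable def quantile {Ω : Type*} [MeasurableSpace Ω] (P : Measure Ω) (X : Ω → ℝ) (u : ℝ) : ℝ :=
  sInf {x : ℝ | u ≤ distFun P X x}

/-- A distortion function: an increasing, right-continuous `D : [0,1] → [0,1]`
with `D 0 = 0` and `sup_{u ∈ (0,1)} D u = 1`. -/
structure IsDistortion (D : ℝ → ℝ) : Prop where
  mapsTo : ∀ u ∈ Set.Icc (0:ℝ) 1, D u ∈ Set.Icc (0:ℝ) 1
  mono : ∀ ⦃a b : ℝ⦄, 0 ≤ a → a ≤ b → b ≤ 1 → D a ≤ D b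
  rightCont : ∀ u ∈ Set.Ico (0:ℝ) 1, ContinuousWithinAt D (Set.Icc u 1) u
  zero : D 0 = 0
  sup_one : sSup (D '' Set.Ioo 0 1) = 1

/-- `Q` is the probability measure on the Borel sets of `(0,1)` corresponding to
the distortion function `D`, i.e. `Q (a,b] = D b - D a` for `0 < a ≤ b < 1`. -/
def IsCorresponding (D : ℝ → ℝ) (Q : Measure ℝ) : Prop :=
  IsProbabilityMeasure Q ∧ Q (Set.Ioo (0:ℝ) 1) = 1 ∧
    ∀ a b : ℝ, 0 < a → a ≤ b → b < 1 → Q (Set.Ioc a b) = ENNReal.ofReal (D b - D a)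

/-- `X ∈ 𝓛_Q`, i.e. `∫_{(0,1)} (F^←_X(u))⁺ dQ(u) < ∞`. -/
def memLQ {Ω : Type*} [MeasurableSpace Ω] (P : Measure Ω) (Q : Measure ℝ) (X : Ω → ℝ) : Prop :=
  ∫⁻ u in Set.Ioo (0:ℝ) 1, ENNReal.ofReal (max (quantile P X u) 0) ∂Q < ⊤

/-- The quantile risk measure
`ϱ_Q[X] = ∫_{(0,1)} (F^←_X(u))⁺ dQ(u) - ∫_{(0,1)} (F^←_X(u))⁻ dQ(u)`, with values in `EReal`. -/
noncomputable def rho {Ω : Type*} [MeasurableSpace Ω] (P : Measure Ω) (Q : Measure ℝ)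
    (X : Ω → ℝ) : EReal :=
  ((∫⁻ u in Set.Ioo (0:ℝ) 1, ENNReal.ofReal (max (quantile P X u) 0) ∂Q) : EReal)
    - ((∫⁻ u in Set.Ioo (0:ℝ) 1, ENNReal.ofReal (max (-(quantile P X u)) 0) ∂Q) : EReal)

section Aux

variable {Ω : Type*} [MeasurableSpace Ω] (P : Measure Ω) [IsProbabilityMeasure P] (X : Ω → ℝ)

lemma distFun_nonneg (x : ℝ) : 0 ≤ distFun P X x := ENNReal.toReal_nonneg

lemma distFun_le_one (x : ℝ) : distFun P X x ≤ 1 := by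
  have h := prob_le_one (μ := P) (s := {ω | X ω ≤ x})
  simpa [distFun] using ENNReal.toReal_mono ENNReal.one_ne_top h

lemma distFun_mono : Monotone (distFun P X) := by
  intro a b hab
  exact ENNReal.toReal_mono (measure_ne_top _ _)
    (measure_mono (fun ω (h : X ω ≤ a) => le_trans h hab))

lemma measure_le_eq_ofReal (x : ℝ) :
    P {ω | X ω ≤ x} = ENNReal.ofReal (distFun P X x) :=
  (ENNReal.ofReal_toReal (measure_ne_top _ _)).symm

variable {X}

lemma measSet_le (hX : Measurable X) (x : ℝ) : MeasurableSet {ω | X ω ≤ x} :=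
  hX measurableSet_Iic

lemma exists_le_distFun {u : ℝ} (hu : u < 1) : ∃ x : ℝ, u ≤ distFun P X x := by
  by_contra h
  push_neg at h
  have hU : (⋃ n : ℕ, {ω | X ω ≤ (n : ℝ)}) = univ := by
    ext ω
    simp only [mem_iUnion, mem_setOf_eq, mem_univ, iff_true]
    obtain ⟨n, hn⟩ := exists_nat_ge (X ω)
    exact ⟨n, hn⟩
  have hmono : Monotone (fun n : ℕ => {ω | X ω ≤ (n : ℝ)}) := by
    intro n m hnm ω (h : X ω ≤ (n:ℝ))
    exact le_trans h (by exact_mod_cast hnm)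
  have h1 : (1 : ENNReal) = ⨆ n : ℕ, P {ω | X ω ≤ (n : ℝ)} := by
    rw [← hmono.measure_iUnion, hU, measure_univ]
  have h2 : (⨆ n : ℕ, P {ω | X ω ≤ (n : ℝ)}) ≤ ENNReal.ofReal u := by
    refine iSup_le fun n => ?_
    rw [measure_le_eq_ofReal]
    exact ENNReal.ofReal_le_ofReal (h n).le
  have := h1 ▸ h2
  exact absurd (lt_of_le_of_lt this (ENNReal.ofReal_lt_one.2 hu)) (lt_irrefl _)

lemma exists_distFun_lt (hX : Measurable X) {u : ℝ} (hu : 0 < u) :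
    ∃ x : ℝ, distFun P X x < u := by
  by_contra h
  push_neg at h
  have hI : (⋂ n : ℕ, {ω | X ω ≤ -(n : ℝ)}) = ∅ := by
    ext ω
    simp only [mem_iInter, mem_setOf_eq, mem_empty_iff_false, iff_false, not_forall]
    obtain ⟨n, hn⟩ := exists_nat_gt (-(X ω))
    exact ⟨n, by push_neg; linarith⟩
  have hanti : Antitone (fun n : ℕ => {ω | X ω ≤ -(n : ℝ)}) := by
    intro n m hnm ω (h : X ω ≤ -(m:ℝ))
    refine le_trans h (by simp; exact_mod_cast hnm)
  have h0 : (0 : ENNReal) = ⨅ n : ℕ, P {ω | X ω ≤ -(n : ℝ)} := by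
    rw [← Directed.measure_iInter (fun n => (measSet_le hX _).nullMeasurableSet)
      hanti.directed_ge ⟨0, measure_ne_top _ _⟩, hI, measure_empty]
  have h2 : ENNReal.ofReal u ≤ ⨅ n : ℕ, P {ω | X ω ≤ -(n : ℝ)} := by
    refine le_iInf fun n => ?_
    rw [measure_le_eq_ofReal]
    exact ENNReal.ofReal_le_ofReal (h _)
  rw [← h0] at h2
  exact absurd (lt_of_lt_of_le (ENNReal.ofReal_pos.2 hu) h2) (lt_irrefl _)

lemma quantile_set_nonempty {u : ℝ} (hu : u < 1) :
    {x : ℝ | u ≤ distFun P X x}.Nonempty := exists_le_distFun P hu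

lemma quantile_set_bddBelow (hX : Measurable X) {u : ℝ} (hu : 0 < u) :
    BddBelow {x : ℝ | u ≤ distFun P X x} := by
  obtain ⟨z, hz⟩ := exists_distFun_lt P hX hu
  refine ⟨z, fun y hy => ?_⟩
  by_contra hzy
  push_neg at hzy
  exact absurd (lt_of_le_of_lt (le_trans hy (distFun_mono P X hzy.le)) hz) (lt_irrefl _)

lemma le_distFun_quantile (hX : Measurable X) {u : ℝ} (hu : u ∈ Ioo (0:ℝ) 1) :
    u ≤ distFun P X (quantile P X u) := by
  set S := {x : ℝ | u ≤ distFun P X x} with hS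
  have hne := quantile_set_nonempty (X := X) P hu.2
  have hbdd := quantile_set_bddBelow P hX hu.1
  set m := sInf S with hm
  have hmem : ∀ n : ℕ, u ≤ distFun P X (m + 1/(n+1)) := by
    intro n
    have hlt : m < m + 1/((n:ℝ)+1) := by
      have : (0:ℝ) < 1/((n:ℝ)+1) := by positivity
      linarith
    obtain ⟨y, hyS, hy⟩ := exists_lt_of_csInf_lt hne hlt
    exact le_trans hyS (distFun_mono P X hy.le)
  have hIeq : (⋂ n : ℕ, {ω | X ω ≤ m + 1/(n+1)}) = {ω | X ω ≤ m} := by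
    ext ω
    simp only [mem_iInter, mem_setOf_eq]
    constructor
    · intro h
      by_contra hc
      push_neg at hc
      obtain ⟨n, hn⟩ := exists_nat_one_div_lt (sub_pos.2 hc)
      have := h n
      push_cast at hn ⊢
      linarith
    · intro h n
      have : (0:ℝ) < 1/(n+1) := by positivity
      linarith
  have hanti : Antitone (fun n : ℕ => {ω | X ω ≤ m + 1/((n:ℝ)+1)}) := by
    intro n k hnk ω (h : X ω ≤ m + 1/((k:ℝ)+1))
    have hk : 1/((k:ℝ)+1) ≤ 1/((n:ℝ)+1) := by
      apply one_div_le_one_div_of_le (by positivity)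
      exact_mod_cast Nat.add_le_add_right hnk 1
    exact le_trans h (by linarith)
  have hiInf : P {ω | X ω ≤ m} = ⨅ n : ℕ, P {ω | X ω ≤ m + 1/(n+1)} := by
    rw [← hIeq]
    exact Directed.measure_iInter (fun n => (measSet_le hX _).nullMeasurableSet)
      hanti.directed_ge ⟨0, measure_ne_top _ _⟩
  have hge : ENNReal.ofReal u ≤ P {ω | X ω ≤ m} := by
    rw [hiInf]
    refine le_iInf fun n => ?_
    rw [measure_le_eq_ofReal]
    exact ENNReal.ofReal_le_ofReal (hmem n)
  rw [measure_le_eq_ofReal] at hge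
  exact (ENNReal.ofReal_le_ofReal_iff (distFun_nonneg P X _)).1 hge

lemma quantile_le_iff (hX : Measurable X) {u : ℝ} (hu : u ∈ Ioo (0:ℝ) 1) (x : ℝ) :
    quantile P X u ≤ x ↔ u ≤ distFun P X x := by
  constructor
  · intro h
    exact le_trans (le_distFun_quantile P hX hu) (distFun_mono P X h)
  · intro h
    exact csInf_le (quantile_set_bddBelow P hX hu.1) h

lemma pos_level_eq (hX : Measurable X) (t : ℝ) :
    Ioo (0:ℝ) 1 ∩ {u | t < quantile P X u} = Ioo (distFun P X t) 1 := by
  ext u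
  simp only [mem_inter_iff, mem_Ioo, mem_setOf_eq]
  constructor
  · rintro ⟨⟨hu0, hu1⟩, ht⟩
    refine ⟨?_, hu1⟩
    by_contra hc
    push_neg at hc
    exact absurd ((quantile_le_iff P hX ⟨hu0, hu1⟩ t).2 hc) (not_le.2 ht)
  · rintro ⟨hFu, hu1⟩
    have hu0 : 0 < u := lt_of_le_of_lt (distFun_nonneg P X t) hFu
    refine ⟨⟨hu0, hu1⟩, ?_⟩
    by_contra hc
    push_neg at hc
    exact absurd ((quantile_le_iff P hX ⟨hu0, hu1⟩ t).1 hc) (not_le.2 hFu)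

lemma neg_level_eq (hX : Measurable X) (s : ℝ) :
    Ioo (0:ℝ) 1 ∩ {u | quantile P X u < s}
      = ⋃ n : ℕ, (Ioo (0:ℝ) 1 ∩ Iic (distFun P X (s - 1/(n+1)))) := by
  ext u
  simp only [mem_inter_iff, mem_Ioo, mem_iUnion, mem_Iic, mem_setOf_eq]
  constructor
  · rintro ⟨⟨hu0, hu1⟩, hlt⟩
    have hne := quantile_set_nonempty (X := X) P hu1
    obtain ⟨y, hyS, hy⟩ := exists_lt_of_csInf_lt hne hlt
    obtain ⟨n, hn⟩ := exists_nat_one_div_lt (sub_pos.2 hy)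
    refine ⟨n, ⟨hu0, hu1⟩, ?_⟩
    refine le_trans hyS (distFun_mono P X ?_)
    push_cast at hn ⊢
    linarith
  · rintro ⟨n, ⟨hu0, hu1⟩, hle⟩
    refine ⟨⟨hu0, hu1⟩, ?_⟩
    have := (quantile_le_iff P hX ⟨hu0, hu1⟩ (s - 1/(n+1))).2 hle
    have hpos : (0:ℝ) < 1/((n:ℝ)+1) := by positivity
    linarith

lemma P_gt_eq (hX : Measurable X) (t : ℝ) :
    P {ω | t < X ω} = ENNReal.ofReal (1 - distFun P X t) := by
  have hcompl : {ω | t < X ω} = {ω | X ω ≤ t}ᶜ := by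
    ext ω; simp [not_le]
  rw [hcompl, measure_compl (measSet_le hX t) (measure_ne_top _ _), measure_univ,
    measure_le_eq_ofReal, ENNReal.ofReal_sub _ (distFun_nonneg P X t), ENNReal.ofReal_one]

lemma P_lt_eq (hX : Measurable X) (s : ℝ) :
    P {ω | X ω < s} = ⨆ n : ℕ, ENNReal.ofReal (distFun P X (s - 1/(n+1))) := by
  have hU : {ω | X ω < s} = ⋃ n : ℕ, {ω | X ω ≤ s - 1/((n:ℝ)+1)} := by
    ext ω
    simp only [mem_setOf_eq, mem_iUnion]
    constructor
    · intro h
      obtain ⟨n, hn⟩ := exists_nat_one_div_lt (sub_pos.2 h)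
      exact ⟨n, by linarith⟩
    · rintro ⟨n, hn⟩
      have : (0:ℝ) < 1/((n:ℝ)+1) := by positivity
      linarith
  have hmono : Monotone (fun n : ℕ => {ω | X ω ≤ s - 1/((n:ℝ)+1)}) := by
    intro n k hnk ω (h : X ω ≤ s - 1/((n:ℝ)+1))
    have hk : 1/((k:ℝ)+1) ≤ 1/((n:ℝ)+1) := by
      apply one_div_le_one_div_of_le (by positivity)
      exact_mod_cast Nat.add_le_add_right hnk 1
    exact le_trans h (by linarith)
  rw [hU, hmono.measure_iUnion]
  exact iSup_congr fun n => measure_le_eq_ofReal P X _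

end Aux

section QLem

variable {D : ℝ → ℝ} {Q : Measure ℝ}
  (hD : IsDistortion D) (hQ : IsCorresponding D Q)
  (hconv : ConvexOn ℝ (Set.Icc (0:ℝ) 1) D)

include hD hQ hconv

lemma D_le_self {c : ℝ} (hc0 : 0 ≤ c) (hc1 : c ≤ 1) : D c ≤ c := by
  have h1 : D 1 ≤ 1 := (hD.mapsTo 1 ⟨zero_le_one, le_refl 1⟩).2
  have h1' : 0 ≤ D 1 := (hD.mapsTo 1 ⟨zero_le_one, le_refl 1⟩).1
  have := hconv.2 (show (1:ℝ) ∈ Icc (0:ℝ) 1 from ⟨zero_le_one, le_refl 1⟩)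
    (show (0:ℝ) ∈ Icc (0:ℝ) 1 from ⟨le_refl 0, zero_le_one⟩) hc0 (sub_nonneg.2 hc1) (by ring)
  simp only [smul_eq_mul, mul_one, mul_zero, add_zero, hD.zero] at this
  calc D c ≤ c * D 1 := this
    _ ≤ c * 1 := by nlinarith
    _ = c := mul_one c

lemma D_nonneg {c : ℝ} (hc0 : 0 ≤ c) (hc1 : c ≤ 1) : 0 ≤ D c := (hD.mapsTo c ⟨hc0, hc1⟩).1

lemma Q_Ioc_le {c : ℝ} (hc : 0 < c) (hc1 : c < 1) :
    Q (Ioc 0 c) ≤ ENNReal.ofReal (D c) := by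
  have hun : Ioc (0:ℝ) c = ⋃ n : ℕ, Ioc (c / ((n:ℝ)+2)) c := by
    ext u
    simp only [mem_Ioc, mem_iUnion]
    constructor
    · rintro ⟨hu0, huc⟩
      obtain ⟨n, hn⟩ := exists_nat_gt (c / u)
      refine ⟨n, ?_, huc⟩
      rw [div_lt_iff₀ (by positivity)]
      calc c = u * (c / u) := by field_simp
        _ < u * ((n:ℝ)+2) := by
            apply mul_lt_mul_of_pos_left _ hu0
            linarith
    · rintro ⟨n, hn, huc⟩
      exact ⟨lt_trans (by positivity) hn, huc⟩
  have hmono : Monotone (fun n : ℕ => Ioc (c / ((n:ℝ)+2)) c) := by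
    intro n k hnk
    apply Ioc_subset_Ioc_left
    apply div_le_div_of_nonneg_left hc.le (by positivity)
    exact_mod_cast Nat.add_le_add_right hnk 2
  rw [hun, hmono.measure_iUnion]
  refine iSup_le fun n => ?_
  have han0 : 0 < c / ((n:ℝ)+2) := by positivity
  have han1 : c / ((n:ℝ)+2) ≤ c := by
    apply div_le_self hc.le; linarith [Nat.cast_nonneg (α := ℝ) n]
  rw [hQ.2.2 _ _ han0 han1 hc1]
  apply ENNReal.ofReal_le_ofReal
  have := D_nonneg hD hQ hconv (le_of_lt han0) (le_trans han1 hc1.le)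
  linarith

lemma Q_inter_Iic_le {c : ℝ} (hc0 : 0 ≤ c) (hc1 : c ≤ 1) :
    Q (Ioo 0 1 ∩ Iic c) ≤ ENNReal.ofReal c := by
  have hQP : IsProbabilityMeasure Q := hQ.1
  have hsub : Ioo (0:ℝ) 1 ∩ Iic c ⊆ Ioc 0 c := fun u ⟨⟨h0, _⟩, hc⟩ => ⟨h0, hc⟩
  rcases eq_or_lt_of_le hc1 with h1 | h1
  · calc Q (Ioo 0 1 ∩ Iic c) ≤ 1 := prob_le_one
      _ = ENNReal.ofReal c := by rw [h1]; simp
  rcases eq_or_lt_of_le hc0 with h0 | h0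
  · have : Ioc (0:ℝ) c = ∅ := by rw [← h0]; simp
    calc Q (Ioo 0 1 ∩ Iic c) ≤ Q (Ioc 0 c) := measure_mono hsub
      _ = 0 := by rw [this, measure_empty]
      _ ≤ _ := zero_le
  · calc Q (Ioo 0 1 ∩ Iic c) ≤ Q (Ioc 0 c) := measure_mono hsub
      _ ≤ ENNReal.ofReal (D c) := Q_Ioc_le hD hQ hconv h0 h1
      _ ≤ ENNReal.ofReal c := ENNReal.ofReal_le_ofReal (D_le_self hD hQ hconv hc0 hc1)

lemma Q_Ioo_ge {c : ℝ} (hc0 : 0 ≤ c) (hc1 : c ≤ 1) :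
    ENNReal.ofReal (1 - c) ≤ Q (Ioo c 1) := by
  have hQP : IsProbabilityMeasure Q := hQ.1
  rcases eq_or_lt_of_le hc1 with h1 | h1
  · rw [h1]; simp
  rcases eq_or_lt_of_le hc0 with h0 | h0
  · rw [← h0, hQ.2.1]; simp
  · have hsplit : Q (Ioc 0 c) + Q (Ioo c 1) = 1 := by
      rw [← measure_union (Ioc_disjoint_Ioi_same.mono_right Ioo_subset_Ioi_self)
        measurableSet_Ioo, Ioc_union_Ioo_eq_Ioo hc0 h1, hQ.2.1]
    have hle : Q (Ioc 0 c) ≤ ENNReal.ofReal c :=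
      le_trans (Q_Ioc_le hD hQ hconv h0 h1) (ENNReal.ofReal_le_ofReal (D_le_self hD hQ hconv hc0 hc1))
    have key : ENNReal.ofReal (1 - c) + ENNReal.ofReal c ≤ Q (Ioo c 1) + ENNReal.ofReal c := by
      rw [← ENNReal.ofReal_add (by linarith) hc0]
      simp only [sub_add_cancel, ENNReal.ofReal_one]
      calc (1:ENNReal) = Q (Ioc 0 c) + Q (Ioo c 1) := hsplit.symm
        _ ≤ ENNReal.ofReal c + Q (Ioo c 1) := add_le_add_left hle _
        _ = Q (Ioo c 1) + ENNReal.ofReal c := add_comm _ _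
    exact (ENNReal.add_le_add_iff_right ENNReal.ofReal_ne_top).1 key

end QLem


lemma vol_inter_Iic {c : ℝ} (hc0 : 0 ≤ c) (hc1 : c ≤ 1) :
    volume (Ioo (0:ℝ) 1 ∩ Iic c) = ENNReal.ofReal c := by
  apply le_antisymm
  · calc volume (Ioo (0:ℝ) 1 ∩ Iic c) ≤ volume (Ioc (0:ℝ) c) :=
        measure_mono (fun u hu => ⟨hu.1.1, hu.2⟩)
      _ = ENNReal.ofReal c := by rw [Real.volume_Ioc]; simp
  · calc ENNReal.ofReal c = volume (Ioo (0:ℝ) c) := by rw [Real.volume_Ioo]; simp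
      _ ≤ volume (Ioo (0:ℝ) 1 ∩ Iic c) :=
        measure_mono (fun u hu => ⟨⟨hu.1, lt_of_lt_of_le hu.2 hc1⟩, hu.2.le⟩)

lemma measurable_qIndicator {Ω : Type*} [MeasurableSpace Ω] (P : Measure Ω)
    [IsProbabilityMeasure P] {X : Ω → ℝ} (hX : Measurable X) :
    Measurable ((Ioo (0:ℝ) 1).indicator (quantile P X)) := by
  apply measurable_of_Iic
  intro x
  have hpre : (Ioo (0:ℝ) 1).indicator (quantile P X) ⁻¹' Iic x =
      (Ioo (0:ℝ) 1 ∩ Iic (distFun P X x)) ∪ ((Ioo (0:ℝ) 1)ᶜ ∩ {u : ℝ | (0:ℝ) ≤ x}) := by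
    ext u
    by_cases hu : u ∈ Ioo (0:ℝ) 1
    · simp only [mem_preimage, mem_Iic, indicator_of_mem hu, mem_union, mem_inter_iff,
        mem_compl_iff, hu, mem_setOf_eq, not_true_eq_false, false_and, or_false, true_and]
      exact quantile_le_iff P hX hu x
    · simp [indicator_of_notMem hu, hu]
  rw [hpre]
  exact (measurableSet_Ioo.inter measurableSet_Iic).union
    (measurableSet_Ioo.compl.inter (MeasurableSet.const _))

/-- If `D` is convex, then `𝓛_Q ⊆ {X | E[X⁺] < ∞}` and `E[X] ≤ ϱ_Q[X]` for every `X ∈ 𝓛_Q`,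
where `E[X] := E[X⁺] - E[X⁻] ∈ [-∞,∞)`. -/
theorem expectation_le_rho_of_convex {Ω : Type*} [MeasurableSpace Ω]
    (P : Measure Ω) [IsProbabilityMeasure P] (D : ℝ → ℝ) (Q : Measure ℝ)
    (hD : IsDistortion D) (hQ : IsCorresponding D Q)
    (hconv : ConvexOn ℝ (Set.Icc (0:ℝ) 1) D) :
    ∀ X : Ω → ℝ, Measurable X → memLQ P Q X →
      (∫⁻ ω, ENNReal.ofReal (max (X ω) 0) ∂P) < ⊤ ∧
      ((∫⁻ ω, ENNReal.ofReal (max (X ω) 0) ∂P) : EReal)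
          - ((∫⁻ ω, ENNReal.ofReal (max (-(X ω)) 0) ∂P) : EReal)
        ≤ rho P Q X := by
  intro X hX hmem
  have hQP : IsProbabilityMeasure Q := hQ.1
  set qI := (Ioo (0:ℝ) 1).indicator (quantile P X) with hqIdef
  have hqImeas : Measurable qI := measurable_qIndicator P hX
  have hF01 : ∀ t : ℝ, distFun P X t ∈ Icc (0:ℝ) 1 :=
    fun t => ⟨distFun_nonneg P X t, distFun_le_one P X t⟩
  -- congruence between `quantile` and its indicator version on `(0,1)`
  have hcongr_pos : ∀ ν : Measure ℝ,
      ∫⁻ u in Ioo (0:ℝ) 1, ENNReal.ofReal (max (quantile P X u) 0) ∂ν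
        = ∫⁻ u in Ioo (0:ℝ) 1, ENNReal.ofReal (max (qI u) 0) ∂ν := fun ν =>
    setLIntegral_congr_fun measurableSet_Ioo
      (fun u hu => by rw [hqIdef, indicator_of_mem hu])
  have hcongr_neg : ∀ ν : Measure ℝ,
      ∫⁻ u in Ioo (0:ℝ) 1, ENNReal.ofReal (max (-(quantile P X u)) 0) ∂ν
        = ∫⁻ u in Ioo (0:ℝ) 1, ENNReal.ofReal (max (-(qI u)) 0) ∂ν := fun ν =>
    setLIntegral_congr_fun measurableSet_Ioo
      (fun u hu => by rw [hqIdef, indicator_of_mem hu])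
  -- layer-cake representations
  have lcP_pos : ∫⁻ ω, ENNReal.ofReal (max (X ω) 0) ∂P
      = ∫⁻ t in Ioi (0:ℝ), P {a | t < max (X a) 0} :=
    lintegral_eq_lintegral_meas_lt P (ae_of_all _ fun ω => le_max_right _ _)
      ((hX.max measurable_const).aemeasurable)
  have lcP_neg : ∫⁻ ω, ENNReal.ofReal (max (-(X ω)) 0) ∂P
      = ∫⁻ t in Ioi (0:ℝ), P {a | t < max (-(X a)) 0} :=
    lintegral_eq_lintegral_meas_lt P (ae_of_all _ fun ω => le_max_right _ _)
      ((hX.neg.max measurable_const).aemeasurable)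
  have lcVol_pos : ∫⁻ u in Ioo (0:ℝ) 1, ENNReal.ofReal (max (qI u) 0) ∂volume
      = ∫⁻ t in Ioi (0:ℝ), volume.restrict (Ioo (0:ℝ) 1) {a | t < max (qI a) 0} :=
    lintegral_eq_lintegral_meas_lt _ (ae_of_all _ fun u => le_max_right _ _)
      ((hqImeas.max measurable_const).aemeasurable)
  have lcVol_neg : ∫⁻ u in Ioo (0:ℝ) 1, ENNReal.ofReal (max (-(qI u)) 0) ∂volume
      = ∫⁻ t in Ioi (0:ℝ), volume.restrict (Ioo (0:ℝ) 1) {a | t < max (-(qI a)) 0} :=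
    lintegral_eq_lintegral_meas_lt _ (ae_of_all _ fun u => le_max_right _ _)
      ((hqImeas.neg.max measurable_const).aemeasurable)
  have lcQ_pos : ∫⁻ u in Ioo (0:ℝ) 1, ENNReal.ofReal (max (qI u) 0) ∂Q
      = ∫⁻ t in Ioi (0:ℝ), Q.restrict (Ioo (0:ℝ) 1) {a | t < max (qI a) 0} :=
    lintegral_eq_lintegral_meas_lt _ (ae_of_all _ fun u => le_max_right _ _)
      ((hqImeas.max measurable_const).aemeasurable)
  have lcQ_neg : ∫⁻ u in Ioo (0:ℝ) 1, ENNReal.ofReal (max (-(qI u)) 0) ∂Q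
      = ∫⁻ t in Ioi (0:ℝ), Q.restrict (Ioo (0:ℝ) 1) {a | t < max (-(qI a)) 0} :=
    lintegral_eq_lintegral_meas_lt _ (ae_of_all _ fun u => le_max_right _ _)
      ((hqImeas.neg.max measurable_const).aemeasurable)
  -- level sets, positive part
  have hset_pos : ∀ t : ℝ, 0 < t →
      {a : ℝ | t < max (qI a) 0} ∩ Ioo (0:ℝ) 1 = Ioo (distFun P X t) 1 := by
    intro t ht
    rw [← pos_level_eq P hX t]
    ext u
    simp only [mem_inter_iff, mem_setOf_eq]
    constructor
    · rintro ⟨hmax, hu⟩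
      have hq : qI u = quantile P X u := indicator_of_mem hu _
      rw [hq, lt_max_iff] at hmax
      rcases hmax with h | h
      · exact ⟨hu, h⟩
      · linarith
    · rintro ⟨hu, hlt⟩
      refine ⟨?_, hu⟩
      rw [hqIdef, indicator_of_mem hu, lt_max_iff]
      exact Or.inl hlt
  have hvol_pos : ∀ t : ℝ, 0 < t →
      volume.restrict (Ioo (0:ℝ) 1) {a | t < max (qI a) 0}
        = ENNReal.ofReal (1 - distFun P X t) := by
    intro t ht
    rw [Measure.restrict_apply (measurableSet_lt measurable_const
      (hqImeas.max measurable_const)), hset_pos t ht, Real.volume_Ioo]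
  have hQside_pos : ∀ t : ℝ, 0 < t →
      ENNReal.ofReal (1 - distFun P X t)
        ≤ Q.restrict (Ioo (0:ℝ) 1) {a | t < max (qI a) 0} := by
    intro t ht
    rw [Measure.restrict_apply (measurableSet_lt measurable_const
      (hqImeas.max measurable_const)), hset_pos t ht]
    exact Q_Ioo_ge hD hQ hconv (hF01 t).1 (hF01 t).2
  have hP_pos : ∀ t : ℝ, 0 < t →
      P {a | t < max (X a) 0} = ENNReal.ofReal (1 - distFun P X t) := by
    intro t ht
    have hsp : {a | t < max (X a) 0} = {ω | t < X ω} := by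
      ext ω
      simp only [mem_setOf_eq, lt_max_iff]
      constructor
      · rintro (h | h)
        · exact h
        · linarith
      · exact Or.inl
    rw [hsp, P_gt_eq P hX t]
  -- level sets, negative part
  have hmono_neg : ∀ t : ℝ, Monotone
      (fun n : ℕ => Ioo (0:ℝ) 1 ∩ Iic (distFun P X (-t - 1/((n:ℝ)+1)))) := by
    intro t n k hnk
    apply inter_subset_inter_right
    apply Iic_subset_Iic.2
    apply distFun_mono P X
    have hk : 1/((k:ℝ)+1) ≤ 1/((n:ℝ)+1) := by
      apply one_div_le_one_div_of_le (by positivity)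
      exact_mod_cast Nat.add_le_add_right hnk 1
    linarith
  have hset_neg : ∀ t : ℝ, 0 < t →
      {a : ℝ | t < max (-(qI a)) 0} ∩ Ioo (0:ℝ) 1
        = ⋃ n : ℕ, (Ioo (0:ℝ) 1 ∩ Iic (distFun P X (-t - 1/((n:ℝ)+1)))) := by
    intro t ht
    rw [← neg_level_eq P hX (-t)]
    ext u
    simp only [mem_inter_iff, mem_setOf_eq]
    constructor
    · rintro ⟨hmax, hu⟩
      have hq : qI u = quantile P X u := indicator_of_mem hu _
      rw [hq, lt_max_iff] at hmax
      rcases hmax with h | h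
      · exact ⟨hu, by linarith⟩
      · linarith
    · rintro ⟨hu, hlt⟩
      refine ⟨?_, hu⟩
      rw [hqIdef, indicator_of_mem hu, lt_max_iff]
      exact Or.inl (by linarith)
  have hvol_neg : ∀ t : ℝ, 0 < t →
      volume.restrict (Ioo (0:ℝ) 1) {a | t < max (-(qI a)) 0}
        = ⨆ n : ℕ, ENNReal.ofReal (distFun P X (-t - 1/((n:ℝ)+1))) := by
    intro t ht
    rw [Measure.restrict_apply (measurableSet_lt measurable_const
      (hqImeas.neg.max measurable_const) : MeasurableSet {a | t < max (-(qI a)) 0}), hset_neg t ht,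
      (hmono_neg t).measure_iUnion]
    exact iSup_congr fun n => vol_inter_Iic (hF01 _).1 (hF01 _).2
  have hQside_neg : ∀ t : ℝ, 0 < t →
      Q.restrict (Ioo (0:ℝ) 1) {a | t < max (-(qI a)) 0}
        ≤ ⨆ n : ℕ, ENNReal.ofReal (distFun P X (-t - 1/((n:ℝ)+1))) := by
    intro t ht
    rw [Measure.restrict_apply (measurableSet_lt measurable_const
      (hqImeas.neg.max measurable_const) : MeasurableSet {a | t < max (-(qI a)) 0}), hset_neg t ht,
      (hmono_neg t).measure_iUnion]
    exact iSup_mono fun n => Q_inter_Iic_le hD hQ hconv (hF01 _).1 (hF01 _).2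
  have hP_neg : ∀ t : ℝ, 0 < t →
      P {a | t < max (-(X a)) 0}
        = ⨆ n : ℕ, ENNReal.ofReal (distFun P X (-t - 1/((n:ℝ)+1))) := by
    intro t ht
    have hsp : {a | t < max (-(X a)) 0} = {ω | X ω < -t} := by
      ext ω
      simp only [mem_setOf_eq, lt_max_iff]
      constructor
      · rintro (h | h)
        · linarith
        · linarith
      · intro h
        exact Or.inl (by linarith)
    rw [hsp, P_lt_eq P hX (-t)]
  -- assemble: positive part
  have Epos : ∫⁻ ω, ENNReal.ofReal (max (X ω) 0) ∂P
      = ∫⁻ u in Ioo (0:ℝ) 1, ENNReal.ofReal (max (qI u) 0) ∂volume := by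
    rw [lcP_pos, lcVol_pos]
    refine setLIntegral_congr_fun measurableSet_Ioi (fun t ht => ?_)
    rw [hP_pos t ht, hvol_pos t ht]
  have hApos_le : ∫⁻ u in Ioo (0:ℝ) 1, ENNReal.ofReal (max (qI u) 0) ∂volume
      ≤ ∫⁻ u in Ioo (0:ℝ) 1, ENNReal.ofReal (max (qI u) 0) ∂Q := by
    rw [lcVol_pos, lcQ_pos]
    refine lintegral_mono_ae ((ae_restrict_iff' measurableSet_Ioi).2
      (ae_of_all _ fun t ht => ?_))
    rw [hvol_pos t ht]
    exact hQside_pos t ht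
  -- assemble: negative part
  have Eneg : ∫⁻ ω, ENNReal.ofReal (max (-(X ω)) 0) ∂P
      = ∫⁻ u in Ioo (0:ℝ) 1, ENNReal.ofReal (max (-(qI u)) 0) ∂volume := by
    rw [lcP_neg, lcVol_neg]
    refine setLIntegral_congr_fun measurableSet_Ioi (fun t ht => ?_)
    rw [hP_neg t ht, hvol_neg t ht]
  have hBneg_ge : ∫⁻ u in Ioo (0:ℝ) 1, ENNReal.ofReal (max (-(qI u)) 0) ∂Q
      ≤ ∫⁻ u in Ioo (0:ℝ) 1, ENNReal.ofReal (max (-(qI u)) 0) ∂volume := by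
    rw [lcVol_neg, lcQ_neg]
    refine lintegral_mono_ae ((ae_restrict_iff' measurableSet_Ioi).2
      (ae_of_all _ fun t ht => ?_))
    rw [hvol_neg t ht]
    exact hQside_neg t ht
  -- conclusion
  have hmem' : ∫⁻ u in Ioo (0:ℝ) 1, ENNReal.ofReal (max (quantile P X u) 0) ∂Q < ⊤ := hmem
  have hle_pos : ∫⁻ ω, ENNReal.ofReal (max (X ω) 0) ∂P
      ≤ ∫⁻ u in Ioo (0:ℝ) 1, ENNReal.ofReal (max (quantile P X u) 0) ∂Q := by
    rw [hcongr_pos Q, Epos]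
    exact hApos_le
  have hle_neg : ∫⁻ u in Ioo (0:ℝ) 1, ENNReal.ofReal (max (-(quantile P X u)) 0) ∂Q
      ≤ ∫⁻ ω, ENNReal.ofReal (max (-(X ω)) 0) ∂P := by
    rw [hcongr_neg Q, Eneg]
    exact hBneg_ge
  refine ⟨lt_of_le_of_lt hle_pos hmem', ?_⟩
  unfold rho
  exact EReal.sub_le_sub (EReal.coe_ennreal_le_coe_ennreal_iff.2 hle_pos)
    (EReal.coe_ennreal_le_coe_ennreal_iff.2 hle_neg)
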